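/- Let k ≥ 2 and let F be a homogeneous polynomial of degree r+2 in x_0,...,x_k (over ℝ, 1 ≤ r ≤ k−2) such that every partial derivative of F of order r lies in the span I of the 2×2 minors of the Hankel matrix with rows (0!x_0,...,(k−1)!x_{k−1}) and (1!x_1,...,k!x_k). Then F vanishes on the r-th secant variety of the rational normal curve C: for any r+1 points p_0,...,p_r on the affine cone over C and any scalars z_0,...,z_r, F(z_0 p_0 + ... + z_r p_r) = 0. -/

import Mathlib

open MvPolynomial

/-- Iterated partial derivative `∂^n F/∂x_{d 0} ⋯ ∂x_{d (n-1)}`. -/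
noncomputable def iterPderiv (k : ℕ) :
    (n : ℕ) → (Fin n → Fin (k + 1)) → MvPolynomial (Fin (k + 1)) ℝ →
      MvPolynomial (Fin (k + 1)) ℝ
  | 0, _, F => F
  | n + 1, d, F => iterPderiv k n (fun i => d i.succ) (pderiv (d 0) F)

namespace SecantAux

open Finsupp

variable {σ τ : Type*}

noncomputable def iterPD : (n : ℕ) → (Fin n → τ) → MvPolynomial τ ℝ → MvPolynomial τ ℝ
  | 0, _, F => F
  | n + 1, d, F => iterPD n (fun i => d i.succ) (pderiv (d 0) F)

lemma iterPD_add : ∀ (n : ℕ) (d : Fin n → τ) (f g : MvPolynomial τ ℝ),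
    iterPD n d (f + g) = iterPD n d f + iterPD n d g
  | 0, _, _, _ => rfl
  | n + 1, d, f, g => by
    show iterPD n _ (pderiv (d 0) (f + g)) = _
    rw [map_add]
    exact iterPD_add n _ _ _

lemma iterPD_C_mul : ∀ (n : ℕ) (d : Fin n → τ) (a : ℝ) (f : MvPolynomial τ ℝ),
    iterPD n d (C a * f) = C a * iterPD n d f
  | 0, _, _, _ => rfl
  | n + 1, d, a, f => by
    show iterPD n _ (pderiv (d 0) (C a * f)) = _
    rw [pderiv_C_mul]
    exact iterPD_C_mul n _ _ _

lemma iterPD_zero (n : ℕ) (d : Fin n → τ) : iterPD n d 0 = 0 := by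
  have := iterPD_C_mul n d 0 0
  simpa using this

lemma iterPD_sum {ι : Type*} (s : Finset ι) (n : ℕ) (d : Fin n → τ)
    (f : ι → MvPolynomial τ ℝ) :
    iterPD n d (∑ j ∈ s, f j) = ∑ j ∈ s, iterPD n d (f j) := by
  classical
  induction s using Finset.induction with
  | empty => simpa using iterPD_zero n d
  | @insert a s h ih => rw [Finset.sum_insert h, Finset.sum_insert h, iterPD_add, ih]

lemma coeff_pderiv (i : τ) (f : MvPolynomial τ ℝ) (m : τ →₀ ℕ) :
    coeff m (pderiv i f) = (m i + 1) * coeff (m + single i 1) f := by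
  classical
  induction f using MvPolynomial.induction_on' with
  | monomial s a =>
    rw [pderiv_monomial, coeff_monomial, coeff_monomial]
    by_cases h : s = m + single i 1
    · subst h
      rw [if_pos (add_tsub_cancel_right _ _), if_pos rfl]
      simp only [Finsupp.add_apply, Finsupp.single_eq_same]
      push_cast; ring
    · rw [if_neg h, mul_zero]
      by_cases h2 : s - single i 1 = m
      · by_cases h3 : s i = 0
        · rw [if_pos h2, h3]; push_cast; ring
        · exfalso
          apply h
          have hle : single i 1 ≤ s :=
            Finsupp.single_le_iff.2 (Nat.one_le_iff_ne_zero.2 h3)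
          rw [← h2, tsub_add_cancel_of_le hle]
      · rw [if_neg h2]
  | add p q hp hq =>
    rw [map_add, coeff_add, coeff_add, hp, hq, mul_add]

lemma coeff_iterPD : ∀ (n : ℕ) (d : Fin n → τ) (f : MvPolynomial τ ℝ) (m : τ →₀ ℕ),
    ∃ c : ℕ, 0 < c ∧
      coeff m (iterPD n d f) = c * coeff (m + ∑ s : Fin n, single (d s) 1) f
  | 0, d, f, m => ⟨1, one_pos, by simp [iterPD]⟩
  | n + 1, d, f, m => by
    obtain ⟨c, hc, hcf⟩ := coeff_iterPD n (fun i => d i.succ) (pderiv (d 0) f) m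
    refine ⟨c * (((m + ∑ s : Fin n, single (d s.succ) 1 : τ →₀ ℕ) (d 0) : ℕ) + 1),
      by positivity, ?_⟩
    have hidx : (m + ∑ s : Fin n, single (d s.succ) 1) + single (d 0) 1
        = m + ∑ s : Fin (n + 1), single (d s) 1 := by
      rw [Fin.sum_univ_succ]; abel
    have : coeff m (iterPD (n + 1) d f)
        = c * coeff (m + ∑ s : Fin n, single (d s.succ) 1) (pderiv (d 0) f) := hcf
    rw [this, coeff_pderiv, hidx]
    push_cast; ring

lemma degree_add' (x y : τ →₀ ℕ) : (x + y).degree = x.degree + y.degree := by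
  simp [Finsupp.degree_eq_weight_one, map_add]

lemma degree_single' (i : τ) (n : ℕ) : (single i n).degree = n := by
  simp [Finsupp.degree_eq_weight_one, Finsupp.weight_apply, Finsupp.sum_single_index]

lemma exists_rep : ∀ (n : ℕ) (β : τ →₀ ℕ), β.degree = n →
    ∃ d : Fin n → τ, (∑ s : Fin n, single (d s) 1) = β
  | 0, β, h => ⟨Fin.elim0, by simp [(Finsupp.degree_eq_zero_iff β).1 h]⟩
  | n + 1, β, h => by
    have hβ : β ≠ 0 := by
      rintro rfl; rw [map_zero] at h; omega
    obtain ⟨i, hi⟩ : ∃ i, β i ≠ 0 := by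
      by_contra hall; push_neg at hall
      exact hβ (Finsupp.ext fun i => hall i)
    have hle : single i 1 ≤ β := Finsupp.single_le_iff.2 (Nat.one_le_iff_ne_zero.2 hi)
    have hsplit : single i 1 + (β - single i 1) = β := add_tsub_cancel_of_le hle
    have hdeg : (β - single i 1).degree = n := by
      have h2 := congrArg Finsupp.degree hsplit
      rw [degree_add', degree_single', h] at h2
      omega
    obtain ⟨d', hd'⟩ := exists_rep n _ hdeg
    refine ⟨Fin.cons i d', ?_⟩
    rw [Fin.sum_univ_succ]
    simp only [Fin.cons_zero, Fin.cons_succ]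
    rw [hd', hsplit]

variable {σ τ : Type*} [Fintype σ] [Fintype τ] [DecidableEq σ] [DecidableEq τ]

noncomputable def lin (c : σ → τ → ℝ) (j : σ) : MvPolynomial τ ℝ :=
  ∑ i : τ, C (c j i) * X i

lemma pderiv_lin (c : σ → τ → ℝ) (j : σ) (i : τ) :
    pderiv i (lin c j) = C (c j i) := by
  rw [lin, map_sum]
  rw [Finset.sum_eq_single i]
  · simp
  · intro b _ hb
    simp [pderiv_C_mul, pderiv_X_of_ne hb]
  · simp

lemma lin_isHomogeneous (c : σ → τ → ℝ) (j : σ) : (lin c j).IsHomogeneous 1 :=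
  IsHomogeneous.sum _ _ _ fun i _ => isHomogeneous_C_mul_X _ _

lemma pderiv_aeval_lin (c : σ → τ → ℝ) (i : τ) (F : MvPolynomial σ ℝ) :
    pderiv i (aeval (lin c) F) = ∑ j : σ, C (c j i) * aeval (lin c) (pderiv j F) := by
  induction F using MvPolynomial.induction_on with
  | C a => simp
  | add p q hp hq =>
    rw [map_add, map_add, hp, hq, ← Finset.sum_add_distrib]
    refine Finset.sum_congr rfl fun j _ => ?_
    rw [map_add, map_add, mul_add]
  | mul_X p j0 hp =>
    rw [map_mul, aeval_X, pderiv_mul, hp, pderiv_lin, Finset.sum_mul]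
    have : ∀ j : σ, C (c j i) * aeval (lin c) (pderiv j (p * X j0))
        = C (c j i) * aeval (lin c) (pderiv j p) * lin c j0
          + (if j = j0 then C (c j i) * aeval (lin c) p else 0) := by
      intro j
      rw [pderiv_mul, map_add, map_mul, map_mul, aeval_X, mul_add]
      congr 1
      · ring
      · by_cases hj : j = j0
        · subst hj; simp
        · simp [pderiv_X_of_ne (Ne.symm hj), hj]
    rw [Finset.sum_congr rfl fun j _ => this j, Finset.sum_add_distrib,
      Finset.sum_ite_eq' Finset.univ j0 (fun j => C (c j i) * aeval (lin c) p)]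
    simp [mul_comm]

lemma iterPD_aeval_mem (c : σ → τ → ℝ) :
    ∀ (n : ℕ) (d : Fin n → τ) (F : MvPolynomial σ ℝ),
      iterPD n d (aeval (lin c) F) ∈
        Submodule.span ℝ (Set.range fun j : Fin n → σ => aeval (lin c) (iterPD n j F))
  | 0, _, F => Submodule.subset_span ⟨Fin.elim0, rfl⟩
  | n + 1, d, F => by
    have hstep : iterPD (n + 1) d (aeval (lin c) F)
        = ∑ j : σ, C (c j (d 0)) * iterPD n (fun s => d s.succ) (aeval (lin c) (pderiv j F)) := by
      show iterPD n _ (pderiv (d 0) (aeval (lin c) F)) = _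
      rw [pderiv_aeval_lin, iterPD_sum]
      exact Finset.sum_congr rfl fun j _ => iterPD_C_mul n _ _ _
    rw [hstep]
    refine Submodule.sum_mem _ fun j _ => ?_
    rw [← smul_eq_C_mul]
    refine Submodule.smul_mem _ _ ?_
    refine Submodule.span_mono ?_ (iterPD_aeval_mem c n (fun s => d s.succ) (pderiv j F))
    rintro _ ⟨j', rfl⟩
    refine ⟨Fin.cons j j', ?_⟩
    have heq : iterPD (n + 1) (Fin.cons j j') F = iterPD n j' (pderiv j F) := by
      have h0 : iterPD (n + 1) (Fin.cons j j') F
          = iterPD n (fun s => (Fin.cons j j' : Fin (n+1) → σ) s.succ)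
              (pderiv ((Fin.cons j j' : Fin (n+1) → σ) 0) F) := rfl
      rw [h0, Fin.cons_zero]
      congr 1
    exact congrArg (aeval (lin c)) heq

lemma coeff_lin_zero (c : σ → τ → ℝ) (j : σ) : coeff 0 (lin c j) = 0 := by
  simp [lin, coeff_sum, coeff_C_mul, coeff_X']

lemma coeff_lin_one (c : σ → τ → ℝ) (j : σ) (i : τ) :
    coeff (single i 1) (lin c j) = c j i := by
  rw [lin, coeff_sum]
  rw [Finset.sum_eq_single i]
  · simp [coeff_C_mul, coeff_X']
  · intro b _ hb
    simp only [coeff_C_mul, coeff_X']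
    rw [if_neg, mul_zero]
    simp [Finsupp.single_eq_single_iff, hb]
  · simp

lemma coeff_lin_two (c : σ → τ → ℝ) (j : σ) (i : τ) :
    coeff (single i 2) (lin c j) = 0 := by
  rw [lin, coeff_sum]
  refine Finset.sum_eq_zero fun b _ => ?_
  simp only [coeff_C_mul, coeff_X']
  rw [if_neg, mul_zero]
  simp [Finsupp.single_eq_single_iff]

lemma coeff_two_mul (i : τ) (P Q : MvPolynomial τ ℝ)
    (hP0 : coeff 0 P = 0) (hQ0 : coeff 0 Q = 0)
    (hP2 : coeff (single i 2) P = 0) (hQ2 : coeff (single i 2) Q = 0) :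
    coeff (single i 2) (P * Q) = coeff (single i 1) P * coeff (single i 1) Q := by
  rw [coeff_mul, Finsupp.antidiagonal_single, Finset.sum_map]
  have h2 : (Finset.HasAntidiagonal.antidiagonal 2 : Finset (ℕ × ℕ)) = {(0, 2), (1, 1), (2, 0)} := by decide
  rw [h2]
  rw [show ({(0, 2), (1, 1), (2, 0)} : Finset (ℕ × ℕ))
      = insert (0,2) (insert (1,1) {(2,0)}) from rfl]
  rw [Finset.sum_insert (by decide), Finset.sum_insert (by decide), Finset.sum_singleton]
  simp [hP0, hQ0, hP2, hQ2]

lemma iterPderiv_eq_iterPD (k : ℕ) : ∀ (n : ℕ) (d : Fin n → Fin (k + 1))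
    (F : MvPolynomial (Fin (k + 1)) ℝ), iterPderiv k n d F = iterPD n d F
  | 0, _, _ => rfl
  | n + 1, d, F => iterPderiv_eq_iterPD k n (fun i => d i.succ) (pderiv (d 0) F)

end SecantAux


open SecantAux Finsupp in
/-- If `F` is homogeneous of degree `r+2` (`1 ≤ r ≤ k−2`) and all its `r`-th order partial
derivatives lie in the span `I` of the `2×2` Hankel minors, then `F` vanishes on the `r`-th
secant variety of the rational normal curve: it vanishes at every linear combination
`z_0 p_0 + ⋯ + z_r p_r` of `r+1` points of the affine cone over the curve. -/
theorem deriv_in_ideal_implies_vanish_on_secant (k r : ℕ) (hk : 2 ≤ k) (hr1 : 1 ≤ r)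
    (hr2 : r + 2 ≤ k) (F : MvPolynomial (Fin (k + 1)) ℝ) (hF : F.IsHomogeneous (r + 2))
    (hderiv : ∀ d : Fin r → Fin (k + 1),
      iterPderiv k r d F ∈ Submodule.span ℝ
        {p : MvPolynomial (Fin (k + 1)) ℝ | ∃ a b : Fin k,
          p = (C ((a.val).factorial : ℝ) * X a.castSucc) *
                (C ((b.val + 1).factorial : ℝ) * X b.succ) -
              (C ((b.val).factorial : ℝ) * X b.castSucc) *
                (C ((a.val + 1).factorial : ℝ) * X a.succ)}) :
    ∀ z u v : Fin (r + 1) → ℝ,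
      eval (fun j : Fin (k + 1) =>
        ∑ i : Fin (r + 1),
          z i * (u i ^ (k - j.val) * v i ^ j.val / (j.val.factorial : ℝ))) F = 0 := by
  intro z u v
  classical
  set c : Fin (k + 1) → Fin (r + 1) → ℝ :=
    fun j i => u i ^ (k - j.val) * v i ^ j.val / (j.val.factorial : ℝ) with hcdef
  set G : MvPolynomial (Fin (r + 1)) ℝ := aeval (lin c) F with hGdef
  have hgen : ∀ (i : Fin (r + 1)) (a b : Fin k),
      coeff (single i 2) (aeval (lin c)
        ((C ((a.val).factorial : ℝ) * X a.castSucc) *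
            (C ((b.val + 1).factorial : ℝ) * X b.succ) -
          (C ((b.val).factorial : ℝ) * X b.castSucc) *
            (C ((a.val + 1).factorial : ℝ) * X a.succ))) = 0 := by
    intro i a b
    have hCC : ∀ (A B : ℝ) (j j' : Fin (k + 1)),
        aeval (lin c) ((C A * X j) * (C B * X j'))
          = (C A * lin c j) * (C B * lin c j') := by
      intro A B j j'
      rw [map_mul, map_mul, map_mul, aeval_X, aeval_X, aeval_C, aeval_C, algebraMap_eq]
    rw [map_sub, hCC, hCC, coeff_sub]
    rw [coeff_two_mul i _ _ (by rw [coeff_C_mul, coeff_lin_zero, mul_zero])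
        (by rw [coeff_C_mul, coeff_lin_zero, mul_zero])
        (by rw [coeff_C_mul, coeff_lin_two, mul_zero])
        (by rw [coeff_C_mul, coeff_lin_two, mul_zero]),
      coeff_two_mul i _ _ (by rw [coeff_C_mul, coeff_lin_zero, mul_zero])
        (by rw [coeff_C_mul, coeff_lin_zero, mul_zero])
        (by rw [coeff_C_mul, coeff_lin_two, mul_zero])
        (by rw [coeff_C_mul, coeff_lin_two, mul_zero])]
    simp only [coeff_C_mul, coeff_lin_one]
    have hfac : ∀ m : ℕ, ((m.factorial : ℝ)) ≠ 0 :=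
      fun m => Nat.cast_ne_zero.2 (Nat.factorial_ne_zero m)
    have hval : ∀ j : Fin (k + 1),
        ((j.val.factorial : ℝ)) * c j i = u i ^ (k - j.val) * v i ^ j.val := by
      intro j
      rw [hcdef]
      rw [mul_comm, div_mul_cancel₀ _ (hfac j.val)]
    have h1 : ((a.val.factorial : ℝ)) * c a.castSucc i = u i ^ (k - a.val) * v i ^ a.val := by
      simpa using hval a.castSucc
    have h2 : (((b.val + 1).factorial : ℝ)) * c b.succ i
        = u i ^ (k - (b.val + 1)) * v i ^ (b.val + 1) := by
      simpa using hval b.succ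
    have h3 : ((b.val.factorial : ℝ)) * c b.castSucc i = u i ^ (k - b.val) * v i ^ b.val := by
      simpa using hval b.castSucc
    have h4 : (((a.val + 1).factorial : ℝ)) * c a.succ i
        = u i ^ (k - (a.val + 1)) * v i ^ (a.val + 1) := by
      simpa using hval a.succ
    rw [h1, h2, h3, h4]
    have ea : a.val < k := a.isLt
    have eb : b.val < k := b.isLt
    have hU : k - a.val + (k - (b.val + 1)) = k - b.val + (k - (a.val + 1)) := by omega
    have hV : a.val + (b.val + 1) = b.val + (a.val + 1) := by omega
    rw [sub_eq_zero]
    calc u i ^ (k - a.val) * v i ^ a.val * (u i ^ (k - (b.val + 1)) * v i ^ (b.val + 1))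
        = u i ^ (k - a.val + (k - (b.val + 1))) * v i ^ (a.val + (b.val + 1)) := by
          rw [pow_add, pow_add]; ring
      _ = u i ^ (k - b.val + (k - (a.val + 1))) * v i ^ (b.val + (a.val + 1)) := by
          rw [hU, hV]
      _ = u i ^ (k - b.val) * v i ^ b.val * (u i ^ (k - (a.val + 1)) * v i ^ (a.val + 1)) := by
          rw [pow_add, pow_add]; ring
  have hPD : ∀ (i : Fin (r + 1)) (d : Fin r → Fin (r + 1)),
      coeff (single i 2) (iterPD r d G) = 0 := by
    intro i d
    have hmem := iterPD_aeval_mem c r d F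
    set Λ : MvPolynomial (Fin (k + 1)) ℝ →ₗ[ℝ] ℝ :=
      (lcoeff ℝ (single i 2)).comp
        ((aeval (lin c) : MvPolynomial (Fin (k + 1)) ℝ →ₐ[ℝ]
          MvPolynomial (Fin (r + 1)) ℝ).toLinearMap) with hΛ
    have hspan : Submodule.span ℝ
        {p : MvPolynomial (Fin (k + 1)) ℝ | ∃ a b : Fin k,
          p = (C ((a.val).factorial : ℝ) * X a.castSucc) *
                (C ((b.val + 1).factorial : ℝ) * X b.succ) -
              (C ((b.val).factorial : ℝ) * X b.castSucc) *
                (C ((a.val + 1).factorial : ℝ) * X a.succ)} ≤ LinearMap.ker Λ := by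
      rw [Submodule.span_le]
      rintro p ⟨a, b, rfl⟩
      simp only [SetLike.mem_coe, LinearMap.mem_ker, hΛ, LinearMap.coe_comp,
        Function.comp_apply, AlgHom.toLinearMap_apply, lcoeff_apply]
      exact hgen i a b
    have hkill : ∀ j : Fin r → Fin (k + 1),
        coeff (single i 2) (aeval (lin c) (iterPD r j F)) = 0 := by
      intro j
      have hj := hderiv j
      rw [iterPderiv_eq_iterPD] at hj
      have hx := hspan hj
      simp only [LinearMap.mem_ker, hΛ, LinearMap.coe_comp,
        Function.comp_apply, AlgHom.toLinearMap_apply, lcoeff_apply] at hx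
      exact hx
    have hker : Submodule.span ℝ
        (Set.range fun j : Fin r → Fin (k + 1) => aeval (lin c) (iterPD r j F))
        ≤ LinearMap.ker (lcoeff ℝ (single i 2)) := by
      rw [Submodule.span_le]
      rintro _ ⟨j, rfl⟩
      simp only [SetLike.mem_coe, LinearMap.mem_ker, lcoeff_apply]
      exact hkill j
    have hx := hker hmem
    simp only [LinearMap.mem_ker, lcoeff_apply] at hx
    exact hx
  have hGhom : G.IsHomogeneous (r + 2) := by
    have := hF.aeval (lin c) (fun j => lin_isHomogeneous c j)
    rw [hGdef]; simpa using this
  have hG0 : G = 0 := by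
    apply MvPolynomial.ext
    intro m
    rw [coeff_zero]
    by_cases hdeg : m.degree = r + 2
    · obtain ⟨i, hi⟩ : ∃ i, 2 ≤ m i := by
        by_contra hno
        push_neg at hno
        have hle : m.degree ≤ r + 1 := by
          calc m.degree = ∑ i ∈ m.support, m i := rfl
            _ ≤ ∑ _i ∈ m.support, 1 :=
                Finset.sum_le_sum fun i _ => Nat.lt_succ_iff.mp (hno i)
            _ = m.support.card := by simp
            _ ≤ Fintype.card (Fin (r + 1)) := Finset.card_le_univ _
            _ = r + 1 := by simp
        omega
      have hle : single i 2 ≤ m := Finsupp.single_le_iff.2 hi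
      have hmeq : single i 2 + (m - single i 2) = m := add_tsub_cancel_of_le hle
      have hβdeg : (m - single i 2).degree = r := by
        have h2 := congrArg Finsupp.degree hmeq
        rw [degree_add', degree_single', hdeg] at h2
        omega
      obtain ⟨d, hd⟩ := exists_rep r _ hβdeg
      obtain ⟨cN, hcN, hcoeff⟩ := coeff_iterPD r d G (single i 2)
      rw [hd, hmeq] at hcoeff
      have h0 := hPD i d
      rw [hcoeff] at h0
      have hcN' : ((cN : ℝ)) ≠ 0 := Nat.cast_ne_zero.2 hcN.ne'
      exact (mul_eq_zero.mp h0).resolve_left hcN'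
    · exact hGhom.coeff_eq_zero hdeg
  have hEG : eval z G = eval (fun j : Fin (k + 1) => eval z (lin c j)) F := by
    rw [hGdef, aeval_def]
    rw [MvPolynomial.eval₂_comp_left (eval z)
      (algebraMap ℝ (MvPolynomial (Fin (r + 1)) ℝ)) (lin c) F]
    have hcomp : (eval z).comp (algebraMap ℝ (MvPolynomial (Fin (r + 1)) ℝ))
        = RingHom.id ℝ := RingHom.ext fun a => by simp [algebraMap_eq]
    rw [hcomp, eval₂_id]
    rfl
  have hlin : ∀ j : Fin (k + 1),
      eval z (lin c j)
        = ∑ i : Fin (r + 1), z i * (u i ^ (k - j.val) * v i ^ j.val / (j.val.factorial : ℝ)) := by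
    intro j
    rw [lin, map_sum]
    refine Finset.sum_congr rfl fun i _ => ?_
    rw [map_mul, eval_C, eval_X, hcdef, mul_comm]
  have hfun : (fun j : Fin (k + 1) =>
      ∑ i : Fin (r + 1), z i * (u i ^ (k - j.val) * v i ^ j.val / (j.val.factorial : ℝ)))
      = fun j : Fin (k + 1) => eval z (lin c j) := by
    funext j
    rw [hlin]
  rw [hfun, ← hEG, hG0, map_zero]
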